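/- Most cochains are nearly cosystolic: Let X be a finite abstract simplicial complex and k ≥ 0 with N = f_k(X) > 0, and set M = f_{k−1}(X) (with f_{−1}(X) = 1). Then the number of k-cochains φ of X over Z/2 satisfying ‖φ‖_csy < (1 − 20·√(M/N)) · N/2 is at most 0.8^M · 2^N. -/

import Mathlib

open Finset

section Simplicial

variable {V : Type*} [DecidableEq V]

/-- `X` is a finite abstract simplicial complex: a finite family of nonempty finite sets
closed under taking nonempty subsets. -/
def IsComplex (X : Finset (Finset V)) : Prop :=
  (∀ σ ∈ X, σ.Nonempty) ∧ ∀ σ ∈ X, ∀ τ ⊆ σ, τ.Nonempty → τ ∈ X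

/-- The `k`-dimensional faces of `X` (faces of cardinality `k+1`). -/
def faces (X : Finset (Finset V)) (k : ℕ) : Finset (Finset V) :=
  X.filter fun σ => σ.card = k + 1

/-- The support of a `k`-cochain. -/
def csupp (X : Finset (Finset V)) (k : ℕ) (φ : Finset V → ZMod 2) : Finset (Finset V) :=
  (faces X k).filter fun σ => φ σ ≠ 0

/-- The norm of a `k`-cochain. -/
def cnorm (X : Finset (Finset V)) (k : ℕ) (φ : Finset V → ZMod 2) : ℕ :=
  (csupp X k φ).card

/-- The coboundary of a `k`-cochain, as a `(k+1)`-cochain. -/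
def cob (X : Finset (Finset V)) (k : ℕ) (φ : Finset V → ZMod 2) : Finset V → ZMod 2 :=
  fun τ => ∑ σ ∈ (faces X k).filter (fun σ => σ ⊆ τ), φ σ

/-- The cosystolic norm of a `k`-cochain, with the reduced convention at `k = 0`. -/
noncomputable def cosys (X : Finset (Finset V)) (k : ℕ) (φ : Finset V → ZMod 2) : ℕ :=
  if k = 0 then
    min (cnorm X 0 φ) (cnorm X 0 fun σ => 1 + φ σ)
  else
    sInf {m | ∃ ψ : Finset V → ZMod 2, m = cnorm X k fun τ => φ τ + cob X (k - 1) ψ τ}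

/-- The `k`-th (coboundary) Cheeger constant, valued in `ℝ≥0∞` (`⊤` if no cochain has
positive cosystolic norm). -/
noncomputable def cheeger (X : Finset (Finset V)) (k : ℕ) : ENNReal :=
  sInf {r : ENNReal | ∃ φ : Finset V → ZMod 2, 0 < cosys X k φ ∧
    r = (cnorm X (k + 1) (cob X k φ) : ENNReal) / (cosys X k φ : ENNReal)}

/-- The boundary of a `k`-chain, as a `(k-1)`-chain. -/
def bdry (X : Finset (Finset V)) (k : ℕ) (c : Finset V → ZMod 2) : Finset V → ZMod 2 :=
  fun τ => ∑ σ ∈ (faces X k).filter (fun σ => τ ⊆ σ), c σ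

/-- A `k`-cycle, with the reduced convention at `k = 0`. -/
def IsCycle (X : Finset (Finset V)) (k : ℕ) (c : Finset V → ZMod 2) : Prop :=
  if k = 0 then ∑ σ ∈ faces X 0, c σ = 0
  else ∀ τ ∈ faces X (k - 1), bdry X k c τ = 0

/-- Evaluation of a `k`-cochain on a `k`-chain. -/
def eval (X : Finset (Finset V)) (k : ℕ) (φ c : Finset V → ZMod 2) : ZMod 2 :=
  ∑ σ ∈ faces X k, φ σ * c σ

end Simplicial

/-- `f_{k-1}(X)`, with the convention `f_{-1}(X) = 1`. -/
def fPrev {V : Type*} [DecidableEq V] (X : Finset (Finset V)) (k : ℕ) : ℕ :=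
  if k = 0 then 1 else (faces X (k - 1)).card

/-- The type of `k`-dimensional faces of `X`. -/
def KFace {V : Type*} [DecidableEq V] (X : Finset (Finset V)) (k : ℕ) : Type _ :=
  {σ : Finset V // σ ∈ faces X k}

/-- The extension by zero of a cochain defined on the `k`-faces of `X` to all of
`Finset V`. -/
noncomputable def extendZero {V : Type*} [DecidableEq V] (X : Finset (Finset V)) (k : ℕ)
    (φ : KFace X k → ZMod 2) : Finset V → ZMod 2 :=
  fun σ => if h : σ ∈ faces X k then φ ⟨σ, h⟩ else 0


-- analytic helpers
lemma expNegLe {e : ℝ} (he : 0 ≤ e) : Real.exp (-e) ≤ 1 - e + e^2/2 := by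
  have h1 : 1 + e + e^2/2 ≤ Real.exp e := Real.quadratic_le_exp_of_nonneg he
  have h2 : (0:ℝ) < 1 + e + e^2/2 := by nlinarith
  have h3 : (0:ℝ) < 1 - e + e^2/2 := by nlinarith [sq_nonneg (e-1)]
  have h4 : (1:ℝ) ≤ (1 - e + e^2/2) * (1 + e + e^2/2) := by nlinarith [pow_le_pow_left₀ (by norm_num : (0:ℝ) ≤ 0) (le_refl (0:ℝ)) 4, sq_nonneg e, pow_two_nonneg e]
  rw [Real.exp_neg]
  rw [inv_le_iff_one_le_mul₀ (Real.exp_pos e)]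
  calc (1:ℝ) ≤ (1 - e + e^2/2) * (1 + e + e^2/2) := h4
    _ ≤ (1 - e + e^2/2) * Real.exp e := by
        exact mul_le_mul_of_nonneg_left h1 h3.le

lemma onePlusExpNeg {e : ℝ} (he : 0 ≤ e) :
    1 + Real.exp (-e) ≤ 2 * Real.exp (e^2/4 - e/2) := by
  have h1 := expNegLe he
  have h2 : 1 + (e^2/4 - e/2) ≤ Real.exp (e^2/4 - e/2) := by
    have := Real.add_one_le_exp (e^2/4 - e/2); linarith
  nlinarith

-- Chernoff sum bound
lemma sum_choose_le (N m : ℕ) {x : ℝ} (hx0 : 0 < x) (hx1 : x ≤ 1) :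
    (∑ j ∈ range (m+1), (N.choose j : ℝ)) * x ^ m ≤ (1+x)^N := by
  have h1 : (∑ j ∈ range (m+1), (N.choose j : ℝ)) * x ^ m
      ≤ ∑ j ∈ range (m+1), (N.choose j : ℝ) * x ^ j := by
    rw [Finset.sum_mul]
    apply Finset.sum_le_sum
    intro j hj
    have hj' : j ≤ m := Nat.lt_succ_iff.mp (Finset.mem_range.mp hj)
    have := pow_le_pow_of_le_one hx0.le hx1 hj'
    exact mul_le_mul_of_nonneg_left this (Nat.cast_nonneg _)
  have h2 : ∑ j ∈ range (m+1), (N.choose j : ℝ) * x ^ j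
      ≤ ∑ j ∈ range (max m N + 1), (N.choose j : ℝ) * x ^ j := by
    apply Finset.sum_le_sum_of_subset_of_nonneg
    · exact Finset.range_subset_range.mpr (Nat.succ_le_succ (le_max_left _ _))
    · intro j _ _; positivity
  have h3 : ∑ j ∈ range (max m N + 1), (N.choose j : ℝ) * x ^ j
      = ∑ j ∈ range (N + 1), (N.choose j : ℝ) * x ^ j := by
    symm
    apply Finset.sum_subset_zero_on_sdiff
    · exact Finset.range_subset_range.mpr (Nat.succ_le_succ (le_max_right m N))
    · intro j hj
      simp only [Finset.mem_sdiff, Finset.mem_range] at hj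
      have : N < j := by omega
      simp [Nat.choose_eq_zero_of_lt this]
    · intros; rfl
  have h4 : ∑ j ∈ range (N + 1), (N.choose j : ℝ) * x ^ j = (1+x)^N := by
    rw [add_comm (1:ℝ) x, add_pow]
    apply Finset.sum_congr rfl
    intro j hj; ring
  rw [h3] at h2; rw [h4] at h2; linarith

-- ball counting
lemma ball_card_le {ι : Type*} [Fintype ι] [DecidableEq ι] (b : ι → ZMod 2) (m : ℕ) :
    (univ.filter fun φ : ι → ZMod 2 =>
      (univ.filter fun i => φ i ≠ b i).card ≤ m).card
      ≤ ∑ j ∈ range (m+1), (Fintype.card ι).choose j := by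
  have key : (univ.filter fun φ : ι → ZMod 2 =>
      (univ.filter fun i => φ i ≠ b i).card ≤ m).card
      ≤ ((univ : Finset ι).powerset.filter fun s => s.card ≤ m).card := by
    apply Finset.card_le_card_of_injOn (fun φ => univ.filter fun i => φ i ≠ b i)
    · intro φ hφ
      simp only [Finset.mem_coe, Finset.mem_filter, Finset.mem_powerset] at *
      exact ⟨Finset.filter_subset _ _, hφ.2⟩
    · intro φ hφ φ' hφ' h
      simp only at h
      funext i
      have hiff : (φ i ≠ b i) ↔ (φ' i ≠ b i) := by
        constructor
        · intro hi
          have : i ∈ univ.filter fun j => φ' j ≠ b j := by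
            rw [← h]; simp [hi]
          simpa using this
        · intro hi
          have : i ∈ univ.filter fun j => φ j ≠ b j := by
            rw [h]; simp [hi]
          simpa using this
      have : ∀ a c d : ZMod 2, ((a ≠ d) ↔ (c ≠ d)) → a = c := by decide
      exact this _ _ _ hiff
  refine key.trans ?_
  have sub : ((univ : Finset ι).powerset.filter fun s => s.card ≤ m)
      ⊆ (range (m+1)).biUnion fun j => Finset.powersetCard j univ := by
    intro s hs
    simp only [Finset.mem_filter, Finset.mem_powerset, Finset.mem_biUnion, Finset.mem_range,
      Finset.mem_powersetCard] at *
    exact ⟨s.card, Nat.lt_succ_of_le hs.2, hs.1, rfl⟩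
  refine (Finset.card_le_card sub).trans ?_
  have hbu := Finset.card_biUnion_le (s := range (m+1))
    (t := fun j => Finset.powersetCard j (univ : Finset ι))
  refine le_trans hbu ?_
  apply le_of_eq
  apply Finset.sum_congr rfl
  intro j _
  rw [Finset.card_powersetCard, Finset.card_univ]

section Glue
variable {V : Type*} [DecidableEq V]

instance KFace.instFintype (X : Finset (Finset V)) (k : ℕ) : Fintype (KFace X k) :=
  FinsetCoe.fintype (faces X k)

instance KFace.instDecEq (X : Finset (Finset V)) (k : ℕ) : DecidableEq (KFace X k) :=
  fun a b => decidable_of_iff (a.1 = b.1) Subtype.ext_iff.symm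

lemma KFace.card (X : Finset (Finset V)) (k : ℕ) :
    Fintype.card (KFace X k) = (faces X k).card :=
  Fintype.card_coe (faces X k)

lemma card_filter_KFace (X : Finset (Finset V)) (k : ℕ) (p : Finset V → Prop)
    [DecidablePred p] :
    ((univ : Finset (KFace X k)).filter fun a => p a.1).card
      = ((faces X k).filter p).card := by
  apply Finset.card_bij (fun (a : KFace X k) (_ : a ∈ _) => a.1)
  · intro a ha
    simp only [Finset.mem_filter, Finset.mem_univ, true_and] at ha
    exact Finset.mem_filter.mpr ⟨a.2, ha⟩
  · intro a _ b _ h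
    exact Subtype.ext h
  · intro b hb
    rw [Finset.mem_filter] at hb
    exact ⟨⟨b, hb.1⟩, Finset.mem_filter.mpr ⟨Finset.mem_univ _, hb.2⟩, rfl⟩

lemma cnorm_add_eq (X : Finset (Finset V)) (k : ℕ) (φ : KFace X k → ZMod 2)
    (g : Finset V → ZMod 2) :
    cnorm X k (fun τ => extendZero X k φ τ + g τ)
      = ((univ : Finset (KFace X k)).filter fun σ => φ σ ≠ g σ.1).card := by
  have hfilt : ((univ : Finset (KFace X k)).filter
        fun a => extendZero X k φ a.1 + g a.1 ≠ 0)
      = ((univ : Finset (KFace X k)).filter fun σ => φ σ ≠ g σ.1) := by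
    apply Finset.filter_congr
    intro σ _
    have he : extendZero X k φ σ.1 = φ σ := by unfold extendZero; rw [dif_pos σ.2]; rfl
    rw [he]
    exact (by decide : ∀ u v : ZMod 2, (u + v ≠ 0) ↔ (u ≠ v)) _ _
  unfold cnorm csupp
  rw [← card_filter_KFace X k (fun τ => extendZero X k φ τ + g τ ≠ 0), hfilt]

lemma exists_B (X : Finset (Finset V)) (k : ℕ) :
    ∃ B : Finset (KFace X k → ZMod 2), B.card ≤ 2 ^ fPrev X k ∧
      ∀ φ : KFace X k → ZMod 2, ∃ b ∈ B,
        ((univ.filter fun i => φ i ≠ b i).card) ≤ cosys X k (extendZero X k φ) := by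
  classical
  cases k with
  | zero =>
    refine ⟨{(fun _ => 0), (fun _ => 1)}, ?_, ?_⟩
    · have h1 : fPrev X 0 = 1 := by simp [fPrev]
      rw [h1]
      refine (Finset.card_insert_le _ _).trans ?_
      simp
    · intro φ
      have e0 : cnorm X 0 (extendZero X 0 φ)
          = ((univ : Finset (KFace X 0)).filter fun σ => φ σ ≠ (0:ZMod 2)).card := by
        rw [show extendZero X 0 φ
            = (fun τ => extendZero X 0 φ τ + (fun _ : Finset V => (0:ZMod 2)) τ) from
          by funext τ; simp]
        exact cnorm_add_eq X 0 φ (fun _ => 0)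
      have e1 : cnorm X 0 (fun σ => 1 + extendZero X 0 φ σ)
          = ((univ : Finset (KFace X 0)).filter fun σ => φ σ ≠ (1:ZMod 2)).card := by
        rw [show (fun σ => 1 + extendZero X 0 φ σ)
            = (fun τ => extendZero X 0 φ τ + (fun _ : Finset V => (1:ZMod 2)) τ) from
          by funext τ; exact add_comm _ _]
        exact cnorm_add_eq X 0 φ (fun _ => 1)
      have hcos : cosys X 0 (extendZero X 0 φ)
          = min (cnorm X 0 (extendZero X 0 φ))
              (cnorm X 0 (fun σ => 1 + extendZero X 0 φ σ)) := by
        unfold cosys; rw [if_pos rfl]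
      rcases le_total (cnorm X 0 (extendZero X 0 φ))
          (cnorm X 0 (fun σ => 1 + extendZero X 0 φ σ)) with h | h
      · exact ⟨(fun _ => 0), by simp, by rw [hcos, min_eq_left h, e0]⟩
      · exact ⟨(fun _ => 1), by simp, by rw [hcos, min_eq_right h, e1]⟩
  | succ n =>
    refine ⟨Finset.image
      (fun ψ0 : KFace X n → ZMod 2 =>
        fun σ : KFace X (n+1) => cob X n (extendZero X n ψ0) σ.1) univ, ?_, ?_⟩
    · refine (Finset.card_image_le).trans ?_
      rw [Finset.card_univ, Fintype.card_fun, ZMod.card 2, KFace.card]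
      have : fPrev X (n+1) = (faces X n).card := by simp [fPrev]
      rw [this]
    · intro φ
      have hne : {m | ∃ ψ : Finset V → ZMod 2,
          m = cnorm X (n+1) fun τ => extendZero X (n+1) φ τ + cob X n ψ τ}.Nonempty :=
        ⟨_, 0, rfl⟩
      obtain ⟨ψ, hψ⟩ := Nat.sInf_mem hne
      refine ⟨(fun σ => cob X n ψ σ.1), ?_, ?_⟩
      · apply Finset.mem_image.mpr
        refine ⟨fun s => ψ s.1, Finset.mem_univ _, ?_⟩
        funext σ
        show cob X n (extendZero X n fun s => ψ s.1) σ.1 = cob X n ψ σ.1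
        unfold cob
        apply Finset.sum_congr rfl
        intro σ' hσ'
        have hm : σ' ∈ faces X n := (Finset.mem_filter.mp hσ').1
        simp [extendZero, hm]
      · have hd := cnorm_add_eq X (n+1) φ (fun τ => cob X n ψ τ)
        have hcos : cosys X (n+1) (extendZero X (n+1) φ)
            = sInf {m | ∃ ψ : Finset V → ZMod 2,
              m = cnorm X (n+1) fun τ => extendZero X (n+1) φ τ + cob X n ψ τ} := by
          unfold cosys; rw [if_neg (Nat.succ_ne_zero n)]; rfl
        rw [hcos, hψ, ← hd]

end Glue

set_option maxHeartbeats 1000000 in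
/-- **Most cochains are nearly cosystolic**: with `N = f_k(X) > 0` and `M = f_{k-1}(X)`,
the number of `k`-cochains `φ` with `‖φ‖_csy < (1 - 20√(M/N)) N/2` is at most
`0.8^M ⬝ 2^N`. -/
theorem most_cochains_nearly_cosystolic {V : Type*} [DecidableEq V]
    (X : Finset (Finset V)) (hX : IsComplex X) (k : ℕ)
    (hN : 0 < (faces X k).card) :
    ({φ : KFace X k → ZMod 2 |
          (cosys X k (extendZero X k φ) : ℝ) <
            (1 - 20 * Real.sqrt ((fPrev X k : ℝ) / ((faces X k).card : ℝ))) *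
              (((faces X k).card : ℝ) / 2)}.ncard : ℝ) ≤
      (0.8 : ℝ) ^ (fPrev X k) * 2 ^ (faces X k).card := by
  classical
  obtain ⟨B, hBcard, hBd⟩ := exists_B X k
  set N := (faces X k).card with hNdef
  set M := fPrev X k with hMdef
  set ε : ℝ := 20 * Real.sqrt ((M : ℝ) / (N : ℝ)) with hεdef
  set T : ℝ := (1 - ε) * ((N : ℝ) / 2) with hTdef
  have hε0 : (0:ℝ) ≤ ε := by positivity
  have hNR : (0:ℝ) < (N:ℝ) := by exact_mod_cast hN
  by_cases hT0 : T ≤ 0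
  · have hempty : {φ : KFace X k → ZMod 2 |
        ((cosys X k (extendZero X k φ) : ℝ)) < T} = ∅ := by
      ext φ
      simp only [Set.mem_setOf_eq, Set.mem_empty_iff_false, iff_false, not_lt]
      exact le_trans hT0 (Nat.cast_nonneg _)
    rw [hempty, Set.ncard_empty]
    push_cast
    positivity
  push_neg at hT0
  set m : ℕ := ⌈T⌉₊ - 1 with hmdef
  have hceil : 1 ≤ ⌈T⌉₊ := Nat.one_le_ceil_iff.mpr hT0
  have hm1 : (m : ℕ) + 1 = ⌈T⌉₊ := by omega
  have hmT : (m:ℝ) < T := by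
    have h1 : (⌈T⌉₊:ℝ) < T + 1 := Nat.ceil_lt_add_one hT0.le
    have h2 : ((m:ℕ):ℝ) + 1 = (⌈T⌉₊:ℝ) := by exact_mod_cast congrArg (Nat.cast (R := ℝ)) hm1
    linarith
  have hdm : ∀ d : ℕ, (d:ℝ) < T → d ≤ m := by
    intro d hd
    have := Nat.lt_ceil.mpr hd
    omega
  set S : Set (KFace X k → ZMod 2) :=
    {φ | ((cosys X k (extendZero X k φ) : ℝ)) < T} with hSdef
  have hfin : S.Finite := Set.toFinite S
  have hsub : hfin.toFinset ⊆ B.biUnion (fun b => univ.filter fun φ =>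
      (univ.filter fun i => φ i ≠ b i).card ≤ m) := by
    intro φ hφ
    rw [Set.Finite.mem_toFinset] at hφ
    obtain ⟨b, hbB, hble⟩ := hBd φ
    have hb : ((univ.filter fun i => φ i ≠ b i).card : ℝ) < T :=
      lt_of_le_of_lt (by exact_mod_cast hble) hφ
    exact Finset.mem_biUnion.mpr ⟨b, hbB,
      Finset.mem_filter.mpr ⟨Finset.mem_univ _, hdm _ hb⟩⟩
  have hcount : S.ncard ≤ B.card * ∑ j ∈ range (m+1), N.choose j := by
    rw [Set.ncard_eq_toFinset_card S hfin]
    refine (Finset.card_le_card hsub).trans ?_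
    have hbu := Finset.card_biUnion_le (s := B)
      (t := fun b => univ.filter fun φ : KFace X k → ZMod 2 =>
        (univ.filter fun i => φ i ≠ b i).card ≤ m)
    refine hbu.trans ?_
    have hball : ∀ b ∈ B, (univ.filter fun φ : KFace X k → ZMod 2 =>
        (univ.filter fun i => φ i ≠ b i).card ≤ m).card
        ≤ ∑ j ∈ range (m+1), N.choose j := by
      intro b _
      have := ball_card_le b m
      rwa [KFace.card] at this
    refine (Finset.sum_le_sum hball).trans ?_
    rw [Finset.sum_const, smul_eq_mul]
  -- real-number chain
  have hεN : (N:ℝ) * ε^2 = 400 * (M:ℝ) := by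
    rw [hεdef, mul_pow, Real.sq_sqrt (by positivity : (0:ℝ) ≤ (M:ℝ)/(N:ℝ)),
      div_eq_mul_inv]
    have h := mul_inv_cancel₀ (ne_of_gt hNR)
    linear_combination 400 * (M:ℝ) * h
  set x : ℝ := Real.exp (-ε) with hxdef
  have hx0 : 0 < x := Real.exp_pos _
  have hx1 : x ≤ 1 := by
    rw [hxdef, ← Real.exp_zero]
    exact Real.exp_le_exp.mpr (by linarith)
  have hchern := sum_choose_le N m hx0 hx1
  have hsum : (∑ j ∈ range (m+1), (N.choose j:ℝ)) ≤ (1+x)^N * Real.exp (ε * m) := by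
    have hxm : x ^ m = Real.exp ((m:ℝ) * (-ε)) := (Real.exp_nat_mul _ m).symm
    have hone : Real.exp (ε * m) * x ^ m = 1 := by
      rw [hxm, ← Real.exp_add, show ε * m + (m:ℝ) * (-ε) = 0 by ring, Real.exp_zero]
    calc (∑ j ∈ range (m+1), (N.choose j:ℝ))
        = (∑ j ∈ range (m+1), (N.choose j:ℝ)) * (Real.exp (ε * m) * x ^ m) := by
          rw [hone, mul_one]
      _ = ((∑ j ∈ range (m+1), (N.choose j:ℝ)) * x ^ m) * Real.exp (ε * m) := by ring
      _ ≤ (1+x)^N * Real.exp (ε * m) :=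
          mul_le_mul_of_nonneg_right hchern (Real.exp_nonneg _)
  have h1x : (1+x)^N ≤ 2^N * Real.exp ((N:ℝ) * (ε^2/4 - ε/2)) := by
    calc (1+x)^N ≤ (2*Real.exp (ε^2/4 - ε/2))^N :=
          pow_le_pow_left₀ (by positivity) (onePlusExpNeg hε0) N
      _ = 2^N * Real.exp ((N:ℝ) * (ε^2/4 - ε/2)) := by
          rw [mul_pow, ← Real.exp_nat_mul]
  have hexp : (N:ℝ) * (ε^2/4 - ε/2) + ε * T = (M:ℝ) * (-100) := by
    rw [hTdef]
    linear_combination (-(1:ℝ)/4) * hεN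
  have h08 : 2 * Real.exp (-100) ≤ (0.8:ℝ) := by
    have h101 : (101:ℝ) ≤ Real.exp 100 := by linarith [Real.add_one_le_exp (100:ℝ)]
    have hinv : (Real.exp 100)⁻¹ ≤ (101:ℝ)⁻¹ := by
      apply inv_anti₀ (by norm_num) h101
    rw [Real.exp_neg]
    rw [show (101:ℝ)⁻¹ = 1/101 by norm_num] at hinv
    linarith
  calc ((S.ncard : ℕ) : ℝ)
      ≤ ((B.card * ∑ j ∈ range (m+1), N.choose j : ℕ) : ℝ) := by exact_mod_cast hcount
    _ = (B.card : ℝ) * ∑ j ∈ range (m+1), (N.choose j : ℝ) := by push_cast; ring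
    _ ≤ 2^M * ((1+x)^N * Real.exp (ε * m)) := by
        apply mul_le_mul (by exact_mod_cast hBcard) hsum
          (Finset.sum_nonneg fun j _ => Nat.cast_nonneg _) (by positivity)
    _ ≤ 2^M * ((2^N * Real.exp ((N:ℝ) * (ε^2/4 - ε/2))) * Real.exp (ε * T)) := by
        apply mul_le_mul_of_nonneg_left _ (by positivity)
        apply mul_le_mul h1x (Real.exp_le_exp.mpr (by nlinarith)) (Real.exp_nonneg _)
          (by positivity)
    _ = 2^N * (2^M * Real.exp ((N:ℝ) * (ε^2/4 - ε/2) + ε * T)) := by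
        rw [Real.exp_add]; ring
    _ = 2^N * (2 * Real.exp (-100))^M := by
        rw [hexp, Real.exp_nat_mul, ← mul_pow]
    _ ≤ 2^N * (0.8:ℝ)^M := by
        apply mul_le_mul_of_nonneg_left _ (by positivity)
        exact pow_le_pow_left₀ (by positivity) h08 M
    _ = (0.8:ℝ)^M * 2^N := mul_comm _ _
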